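/- Let M be a Hausdorff topological abelian group and let ρ : [0,∞) × M → M be a map such that ρ(λ+μ, x) = ρ(λ, x) + ρ(μ, x), ρ(λ, x+y) = ρ(λ, x) + ρ(λ, y), ρ(λ, ρ(μ, x)) = ρ(λμ, x), and ρ(1, x) = x for all λ, μ ∈ [0,∞), x, y ∈ M, and suppose ρ is continuous. Then the map ⋆ : ℝ × M → M defined by λ ⋆ x = ρ(λ, x) for λ ≥ 0 and λ ⋆ x = −ρ(−λ, x) for λ ≤ 0 is continuous and makes M a topological vector space over ℝ (extending its given topological abelian group structure). -/

import Mathlib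

open scoped NNReal

/-- The extension of a non-negative scaling map `ρ` to real scalars:
`lam ⋆ x = ρ(lam, x)` for `lam ≥ 0` and `lam ⋆ x = -ρ(-lam, x)` for `lam ≤ 0`. -/
noncomputable def starMap {M : Type*} [Neg M] (ρ : ℝ≥0 × M → M) : ℝ × M → M :=
  fun p => if 0 ≤ p.1 then ρ (Real.toNNReal p.1, p.2) else -ρ (Real.toNNReal (-p.1), p.2)

theorem stmt18 {M : Type*} [AddCommGroup M] [TopologicalSpace M] [IsTopologicalAddGroup M]
    [T2Space M]
    (ρ : ℝ≥0 × M → M) (hcont : Continuous ρ)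
    (h1 : ∀ (lam mu : ℝ≥0) (x : M), ρ (lam + mu, x) = ρ (lam, x) + ρ (mu, x))
    (h2 : ∀ (lam : ℝ≥0) (x y : M), ρ (lam, x + y) = ρ (lam, x) + ρ (lam, y))
    (h3 : ∀ (lam mu : ℝ≥0) (x : M), ρ (lam, ρ (mu, x)) = ρ (lam * mu, x))
    (h4 : ∀ x : M, ρ (1, x) = x) :
    Continuous (starMap ρ) ∧
    (∀ (a b : ℝ) (x : M), starMap ρ (a + b, x) = starMap ρ (a, x) + starMap ρ (b, x)) ∧
    (∀ (a : ℝ) (x y : M), starMap ρ (a, x + y) = starMap ρ (a, x) + starMap ρ (a, y)) ∧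
    (∀ (a b : ℝ) (x : M), starMap ρ (a, starMap ρ (b, x)) = starMap ρ (a * b, x)) ∧
    ∀ x : M, starMap ρ (1, x) = x := by
  have hzero : ∀ x : M, ρ (0, x) = 0 := by
    intro x
    have := h1 0 0 x
    simp only [add_zero] at this
    exact right_eq_add.mp this
  set s := starMap ρ with hs
  have snonneg : ∀ (a : ℝ), 0 ≤ a → ∀ x : M, s (a, x) = ρ (a.toNNReal, x) := by
    intro a ha x
    simp [hs, starMap, ha]
  have sneg : ∀ (a : ℝ) (x : M), s (-a, x) = -s (a, x) := by
    intro a x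
    simp only [hs, starMap, neg_neg]
    rcases lt_trichotomy a 0 with h | h | h
    · rw [if_neg (not_le.mpr h), if_pos (le_of_lt (neg_pos.mpr h)), neg_neg]
    · subst h; simp [hzero]
    · rw [if_pos h.le, if_neg (by linarith)]
  -- additivity in the scalar
  have sadd_nn : ∀ (a b : ℝ), 0 ≤ a → 0 ≤ b → ∀ x : M,
      s (a + b, x) = s (a, x) + s (b, x) := by
    intro a b ha hb x
    rw [snonneg a ha, snonneg b hb, snonneg _ (by linarith), Real.toNNReal_add ha hb, h1]
  have sadd_n : ∀ (a b : ℝ), 0 ≤ a → ∀ x : M,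
      s (a + b, x) = s (a, x) + s (b, x) := by
    intro a b ha x
    rcases le_or_gt 0 b with hb | hb
    · exact sadd_nn a b ha hb x
    · rcases le_or_gt 0 (a + b) with hab | hab
      · have key := sadd_nn (a + b) (-b) hab (by linarith) x
        rw [add_neg_cancel_right, sneg] at key
        rw [key]; abel
      · have key := sadd_nn (-(a + b)) a (by linarith) ha x
        have h' : -(a + b) + a = -b := by ring
        rw [h', sneg, sneg] at key
        calc s (a + b, x) = -(-s (a + b, x) + s (a, x)) + s (a, x) := by abel
          _ = -(-s (b, x)) + s (a, x) := by rw [← key]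
          _ = s (a, x) + s (b, x) := by abel
  have sadd : ∀ (a b : ℝ) (x : M), s (a + b, x) = s (a, x) + s (b, x) := by
    intro a b x
    rcases le_or_gt 0 a with ha | ha
    · exact sadd_n a b ha x
    · rcases le_or_gt 0 b with hb | hb
      · rw [add_comm, sadd_n b a hb x, add_comm]
      · have key := sadd_nn (-a) (-b) (by linarith) (by linarith) x
        rw [sneg, sneg, show -a + -b = -(a + b) by ring, sneg] at key
        have := congrArg Neg.neg key
        simpa [neg_add, add_comm] using this
  -- additivity in the vector
  have saddv : ∀ (a : ℝ) (x y : M), s (a, x + y) = s (a, x) + s (a, y) := by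
    intro a x y
    simp only [hs, starMap]
    split
    · exact h2 _ x y
    · rw [h2]; abel
  have szerov : ∀ (a : ℝ), s (a, (0 : M)) = 0 := by
    intro a
    have := saddv a 0 0
    simp only [add_zero] at this
    exact right_eq_add.mp this
  have snegv : ∀ (a : ℝ) (x : M), s (a, -x) = -s (a, x) := by
    intro a x
    have key := saddv a x (-x)
    rw [add_neg_cancel, szerov] at key
    exact eq_neg_of_add_eq_zero_left (by rw [add_comm]; exact key.symm)
  -- compatibility of multiplication
  have smul_nn : ∀ (a b : ℝ), 0 ≤ a → 0 ≤ b → ∀ x : M,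
      s (a, s (b, x)) = s (a * b, x) := by
    intro a b ha hb x
    rw [snonneg b hb, snonneg a ha, snonneg _ (mul_nonneg ha hb), h3,
      Real.toNNReal_mul ha]
  have smul_n : ∀ (a b : ℝ), 0 ≤ a → ∀ x : M, s (a, s (b, x)) = s (a * b, x) := by
    intro a b ha x
    rcases le_or_gt 0 b with hb | hb
    · exact smul_nn a b ha hb x
    · have hb' : s (b, x) = -s (-b, x) := by
        have := sneg (-b) x; rwa [neg_neg] at this
      rw [hb', snegv, smul_nn a (-b) ha (by linarith) x, mul_neg, sneg, neg_neg]
  have smul : ∀ (a b : ℝ) (x : M), s (a, s (b, x)) = s (a * b, x) := by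
    intro a b x
    rcases le_or_gt 0 a with ha | ha
    · exact smul_n a b ha x
    · have ha' : ∀ y : M, s (a, y) = -s (-a, y) := by
        intro y
        have := sneg (-a) y; rwa [neg_neg] at this
      rw [ha', smul_n (-a) b (by linarith) x, neg_mul, sneg, neg_neg]
  -- identity
  have sone : ∀ x : M, s (1, x) = x := by
    intro x
    rw [snonneg 1 zero_le_one, Real.toNNReal_one, h4]
  refine ⟨?_, sadd, saddv, smul, sone⟩
  -- continuity
  have hA : Continuous fun p : ℝ × M => ρ (Real.toNNReal p.1, p.2) :=
    hcont.comp ((continuous_real_toNNReal.comp continuous_fst).prodMk continuous_snd)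
  have hB : Continuous fun p : ℝ × M => -ρ (Real.toNNReal (-p.1), p.2) :=
    (hcont.comp ((continuous_real_toNNReal.comp continuous_fst.neg).prodMk
      continuous_snd)).neg
  have heq : ∀ p : ℝ × M, (fun _ : ℝ × M => (0 : ℝ)) p = (fun p : ℝ × M => p.1) p →
      ρ (Real.toNNReal p.1, p.2) = -ρ (Real.toNNReal (-p.1), p.2) := by
    intro p hp
    simp only at hp
    rw [← hp]
    simp [hzero]
  exact Continuous.if_le hA hB continuous_const continuous_fst heq
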